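/- Let λ : ℕ → ℝ be summable with λ(n) ≥ 0 for all n, let m : ℕ, let u : Fin m → ℓ² with ‖u(i)‖ ≤ 1 for all i, and let c : Fin m → ℂ. Then the number ∑_{i, l} conj(c(i))·c(l)·(∑'_n λ(n)·(⟪u(i), u(l)⟫)^n) is a nonnegative real number (its imaginary part is 0 and its real part is ≥ 0), where ⟪·,·⟫ is the ℓ² inner product. -/

import Mathlib

open scoped BigOperators ComplexInnerProductSpace

/-- Power of a tsum expands as a tsum over tuples, with norm-summability. -/
lemma pow_tsum_expand {f : ℕ → ℂ} (hf : Summable fun k => ‖f k‖) (n : ℕ) :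
    (Summable fun k : Fin n → ℕ => ‖∏ j, f (k j)‖) ∧
      (∑' k, f k) ^ n = ∑' k : Fin n → ℕ, ∏ j, f (k j) := by
  induction n with
  | zero =>
    constructor
    · exact Summable.of_finite
    · rw [pow_zero,
        tsum_eq_single (default : Fin 0 → ℕ)
          (fun b hb => absurd (Subsingleton.elim b default) hb)]
      simp
  | succ n ih =>
    obtain ⟨hs, he⟩ := ih
    have hcomp : ∀ z : ℕ × (Fin n → ℕ),
        (∏ j, f ((Fin.consEquiv (fun _ => ℕ)) z j)) = f z.1 * ∏ j, f (z.2 j) := by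
      intro z
      simp only [Fin.consEquiv_apply]
      rw [Fin.prod_univ_succ]
      simp
    have hmul : Summable fun z : ℕ × (Fin n → ℕ) => ‖f z.1 * ∏ j, f (z.2 j)‖ := by
      have h := Summable.mul_norm hf hs
      exact h
    constructor
    · rw [← (Fin.consEquiv (fun _ => ℕ)).summable_iff]
      have : (fun k : Fin (n + 1) → ℕ => ‖∏ j, f (k j)‖) ∘ (Fin.consEquiv (fun _ => ℕ))
          = fun z : ℕ × (Fin n → ℕ) => ‖f z.1 * ∏ j, f (z.2 j)‖ := by
        funext z; simp only [Function.comp_apply, hcomp z]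
      rw [this]; exact hmul
    · calc (∑' k, f k) ^ (n + 1) = (∑' k, f k) * (∑' k, f k) ^ n := by ring
        _ = (∑' k, f k) * ∑' k : Fin n → ℕ, ∏ j, f (k j) := by rw [he]
        _ = ∑' z : ℕ × (Fin n → ℕ), f z.1 * ∏ j, f (z.2 j) := by
            have h := tsum_mul_tsum_of_summable_norm hf hs
            exact h
        _ = ∑' z : ℕ × (Fin n → ℕ), ∏ j, f ((Fin.consEquiv (fun _ => ℕ)) z j) :=
            tsum_congr fun z => (hcomp z).symm
        _ = ∑' k : Fin (n + 1) → ℕ, ∏ j, f (k j) :=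
            (Fin.consEquiv (fun _ => ℕ)).tsum_eq fun k => ∏ j, f (k j)

theorem stmt7 (lam : ℕ → ℝ) (hlam_sum : Summable lam) (hlam_nonneg : ∀ n, 0 ≤ lam n)
    (m : ℕ) (u : Fin m → lp (fun _ : ℕ => ℂ) 2) (hu : ∀ i, ‖u i‖ ≤ 1)
    (c : Fin m → ℂ) :
    (∑ i : Fin m, ∑ l : Fin m,
        (starRingEnd ℂ) (c i) * c l * ∑' n : ℕ, (lam n : ℂ) * (⟪u i, u l⟫ : ℂ) ^ n).im = 0 ∧
    0 ≤ (∑ i : Fin m, ∑ l : Fin m,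
        (starRingEnd ℂ) (c i) * c l * ∑' n : ℕ, (lam n : ℂ) * (⟪u i, u l⟫ : ℂ) ^ n).re := by
  classical
  set v : Fin m → ℕ → ℂ := fun i k => u i k with hv
  have hinner_sum : ∀ i l : Fin m,
      Summable fun k => (starRingEnd ℂ) (v i k) * v l k := by
    intro i l
    have := lp.summable_inner (𝕜 := ℂ) (u i) (u l)
    simp [RCLike.inner_apply] at this
    exact this.congr fun k => mul_comm _ _
  have hinner_norm : ∀ i l : Fin m,
      Summable fun k => ‖(starRingEnd ℂ) (v i k) * v l k‖ :=
    fun i l => (summable_norm_iff).mpr (hinner_sum i l)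
  have hinner_eq : ∀ i l : Fin m,
      (⟪u i, u l⟫ : ℂ) = ∑' k, (starRingEnd ℂ) (v i k) * v l k := by
    intro i l
    rw [lp.inner_eq_tsum]
    exact tsum_congr fun k => by rw [RCLike.inner_apply]; exact mul_comm _ _
  set P : Fin m → ∀ n : ℕ, (Fin n → ℕ) → ℂ :=
    fun i n k => ∏ j, v i (k j) with hP
  have hprod_eq : ∀ (i l : Fin m) (n : ℕ) (k : Fin n → ℕ),
      (∏ j, (starRingEnd ℂ) (v i (k j)) * v l (k j))
        = (starRingEnd ℂ) (P i n k) * P l n k := by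
    intro i l n k
    rw [Finset.prod_mul_distrib, ← map_prod]
  have hpow : ∀ (i l : Fin m) (n : ℕ),
      (Summable fun k : Fin n → ℕ => (starRingEnd ℂ) (P i n k) * P l n k) ∧
      (⟪u i, u l⟫ : ℂ) ^ n = ∑' k : Fin n → ℕ, (starRingEnd ℂ) (P i n k) * P l n k := by
    intro i l n
    obtain ⟨hs, he⟩ := pow_tsum_expand (hinner_norm i l) n
    constructor
    · exact hs.of_norm.congr fun k => hprod_eq i l n k
    · rw [hinner_eq i l, he]
      exact tsum_congr fun k => hprod_eq i l n k
  set S : ∀ n : ℕ, (Fin n → ℕ) → ℂ := fun n k => ∑ i, c i * P i n k with hS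
  have hQ : ∀ n : ℕ,
      (∑ i, ∑ l, (starRingEnd ℂ) (c i) * c l * (⟪u i, u l⟫ : ℂ) ^ n)
        = ((∑' k : Fin n → ℕ, Complex.normSq (S n k) : ℝ) : ℂ) := by
    intro n
    have hsumm : ∀ i l : Fin m, Summable fun k : Fin n → ℕ =>
        (starRingEnd ℂ) (c i) * c l * ((starRingEnd ℂ) (P i n k) * P l n k) :=
      fun i l => ((hpow i l n).1).mul_left _
    have step3 : ∀ k : Fin n → ℕ,
        (∑ i, ∑ l, (starRingEnd ℂ) (c i) * c l *
            ((starRingEnd ℂ) (P i n k) * P l n k))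
          = ((Complex.normSq (S n k) : ℝ) : ℂ) := by
      intro k
      calc (∑ i, ∑ l, (starRingEnd ℂ) (c i) * c l *
              ((starRingEnd ℂ) (P i n k) * P l n k))
          = ∑ i, ∑ l, ((starRingEnd ℂ) (c i * P i n k)) * (c l * P l n k) := by
            refine Finset.sum_congr rfl fun i _ => Finset.sum_congr rfl fun l _ => ?_
            rw [map_mul]; ring
        _ = (∑ i, (starRingEnd ℂ) (c i * P i n k)) * (∑ l, c l * P l n k) :=
            (Finset.sum_mul_sum _ _ _ _).symm
        _ = (starRingEnd ℂ) (S n k) * S n k := by rw [← map_sum]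
        _ = ((Complex.normSq (S n k) : ℝ) : ℂ) :=
            (Complex.normSq_eq_conj_mul_self).symm
    calc (∑ i, ∑ l, (starRingEnd ℂ) (c i) * c l * (⟪u i, u l⟫ : ℂ) ^ n)
        = ∑ i, ∑ l, ∑' k : Fin n → ℕ,
            (starRingEnd ℂ) (c i) * c l * ((starRingEnd ℂ) (P i n k) * P l n k) := by
          refine Finset.sum_congr rfl fun i _ => Finset.sum_congr rfl fun l _ => ?_
          rw [(hpow i l n).2, ← tsum_mul_left]
      _ = ∑ i, ∑' k : Fin n → ℕ, ∑ l,
            (starRingEnd ℂ) (c i) * c l * ((starRingEnd ℂ) (P i n k) * P l n k) :=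
          Finset.sum_congr rfl fun i _ => (Summable.tsum_finsetSum fun l _ => hsumm i l).symm
      _ = ∑' k : Fin n → ℕ, ∑ i, ∑ l,
            (starRingEnd ℂ) (c i) * c l * ((starRingEnd ℂ) (P i n k) * P l n k) :=
          (Summable.tsum_finsetSum fun i _ => summable_sum fun l _ => hsumm i l).symm
      _ = ∑' k : Fin n → ℕ, ((Complex.normSq (S n k) : ℝ) : ℂ) := tsum_congr step3
      _ = ((∑' k : Fin n → ℕ, Complex.normSq (S n k) : ℝ) : ℂ) :=
          (Complex.ofReal_tsum _).symm
  have hsum_n : ∀ i l : Fin m, Summable fun n : ℕ => (lam n : ℂ) * (⟪u i, u l⟫ : ℂ) ^ n := by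
    intro i l
    have hz : ‖(⟪u i, u l⟫ : ℂ)‖ ≤ 1 := by
      calc ‖(⟪u i, u l⟫ : ℂ)‖ ≤ ‖u i‖ * ‖u l‖ := norm_inner_le_norm _ _
        _ ≤ 1 * 1 := mul_le_mul (hu i) (hu l) (norm_nonneg _) zero_le_one
        _ = 1 := one_mul 1
    refine Summable.of_norm_bounded hlam_sum fun n => ?_
    rw [norm_mul, norm_pow, Complex.norm_real]
    calc |lam n| * ‖(⟪u i, u l⟫ : ℂ)‖ ^ n ≤ |lam n| * 1 :=
          mul_le_mul_of_nonneg_left (pow_le_one₀ (norm_nonneg _) hz) (abs_nonneg _)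
      _ = lam n := by rw [mul_one, abs_of_nonneg (hlam_nonneg n)]
  have hsummn : ∀ i l : Fin m, Summable fun n : ℕ =>
      (starRingEnd ℂ) (c i) * c l * ((lam n : ℂ) * (⟪u i, u l⟫ : ℂ) ^ n) :=
    fun i l => (hsum_n i l).mul_left _
  have hswap : (∑ i : Fin m, ∑ l : Fin m,
        (starRingEnd ℂ) (c i) * c l * ∑' n : ℕ, (lam n : ℂ) * (⟪u i, u l⟫ : ℂ) ^ n)
      = ∑' n : ℕ, (lam n : ℂ) *
          ∑ i, ∑ l, (starRingEnd ℂ) (c i) * c l * (⟪u i, u l⟫ : ℂ) ^ n := by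
    calc (∑ i : Fin m, ∑ l : Fin m,
          (starRingEnd ℂ) (c i) * c l * ∑' n : ℕ, (lam n : ℂ) * (⟪u i, u l⟫ : ℂ) ^ n)
        = ∑ i, ∑ l, ∑' n : ℕ,
            (starRingEnd ℂ) (c i) * c l * ((lam n : ℂ) * (⟪u i, u l⟫ : ℂ) ^ n) := by
          refine Finset.sum_congr rfl fun i _ => Finset.sum_congr rfl fun l _ => ?_
          rw [← tsum_mul_left]
      _ = ∑ i, ∑' n : ℕ, ∑ l,
            (starRingEnd ℂ) (c i) * c l * ((lam n : ℂ) * (⟪u i, u l⟫ : ℂ) ^ n) :=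
          Finset.sum_congr rfl fun i _ => (Summable.tsum_finsetSum fun l _ => hsummn i l).symm
      _ = ∑' n : ℕ, ∑ i, ∑ l,
            (starRingEnd ℂ) (c i) * c l * ((lam n : ℂ) * (⟪u i, u l⟫ : ℂ) ^ n) :=
          (Summable.tsum_finsetSum fun i _ => summable_sum fun l _ => hsummn i l).symm
      _ = ∑' n : ℕ, (lam n : ℂ) *
            ∑ i, ∑ l, (starRingEnd ℂ) (c i) * c l * (⟪u i, u l⟫ : ℂ) ^ n := by
          refine tsum_congr fun n => ?_
          rw [Finset.mul_sum]
          refine Finset.sum_congr rfl fun i _ => ?_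
          rw [Finset.mul_sum]
          exact Finset.sum_congr rfl fun l _ => by ring
  have hfinal : (∑ i : Fin m, ∑ l : Fin m,
        (starRingEnd ℂ) (c i) * c l * ∑' n : ℕ, (lam n : ℂ) * (⟪u i, u l⟫ : ℂ) ^ n)
      = ((∑' n : ℕ, lam n * ∑' k : Fin n → ℕ, Complex.normSq (S n k) : ℝ) : ℂ) := by
    rw [hswap, Complex.ofReal_tsum]
    refine tsum_congr fun n => ?_
    rw [hQ n, Complex.ofReal_mul]
  rw [hfinal]
  exact ⟨Complex.ofReal_im _, by
    rw [Complex.ofReal_re]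
    exact tsum_nonneg fun n =>
      mul_nonneg (hlam_nonneg n) (tsum_nonneg fun k => Complex.normSq_nonneg _)⟩
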